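/- Let ρ : F₂ → Homeo⁺(S¹)~ be a homomorphism from the free group on generators a, b, and let w̄ denote the word obtained by reversing the order of the letters of w ∈ F₂. Then the supremum R(w,r,s) of rot~(ρ(w)) over all ρ with rot~(ρ(a))=r and rot~(ρ(b))=s satisfies R(w,r,s) = R(w̄,r,s). -/

import Mathlib

open CircleDeg1Lift Filter Topology

/-- The translation number of a lift of an orientation-preserving circle homeomorphism. -/
noncomputable def rotZ (f : CircleDeg1Liftˣ) : ℝ :=
  (f : CircleDeg1Lift).translationNumber

/-- The generator `a` of the free group `F₂`. -/
def genA : FreeGroup Bool := FreeGroup.of true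

/-- The generator `b` of the free group `F₂`. -/
def genB : FreeGroup Bool := FreeGroup.of false

/-- `R(w,r,s)`: the supremum of `rot~(ρ w)` over all representations
`ρ : F₂ → Homeo⁺(S¹)~` with `rot~(ρ a) = r` and `rot~(ρ b) = s`. -/
noncomputable def RR (w : FreeGroup Bool) (r s : ℝ) : ℝ :=
  sSup { t : ℝ | ∃ ρ : FreeGroup Bool →* CircleDeg1Liftˣ,
    rotZ (ρ genA) = r ∧ rotZ (ρ genB) = s ∧ rotZ (ρ w) = t }

/-- The word obtained from `w` by reversing the order of its letters. -/
def wordReverse (w : FreeGroup Bool) : FreeGroup Bool :=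
  FreeGroup.mk w.toWord.reverse

/-! ### Auxiliary constructions -/

/-- The homomorphism sending each generator to its inverse. -/
def invHom : FreeGroup Bool →* FreeGroup Bool :=
  FreeGroup.lift (fun i => (FreeGroup.of i)⁻¹)

@[simp] lemma invHom_of (i : Bool) : invHom (FreeGroup.of i) = (FreeGroup.of i)⁻¹ :=
  FreeGroup.lift_apply_of

lemma invHom_invHom (x : FreeGroup Bool) : invHom (invHom x) = x := by
  have : invHom.comp invHom = MonoidHom.id (FreeGroup Bool) := by
    apply FreeGroup.ext_hom
    intro a
    simp
  calc invHom (invHom x) = (invHom.comp invHom) x := rfl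
    _ = x := by rw [this]; rfl

lemma invHom_mk_single (x : Bool) (b : Bool) :
    invHom (FreeGroup.mk [(x, b)]) = (FreeGroup.mk [(x, b)])⁻¹ := by
  cases b
  · have h : FreeGroup.mk [(x, false)] = (FreeGroup.of x)⁻¹ := by
      rw [show (FreeGroup.of x : FreeGroup Bool) = FreeGroup.mk [(x, true)] from rfl,
        FreeGroup.inv_mk]
      rfl
    rw [h, map_inv, invHom_of, inv_inv]
  · exact invHom_of x

lemma mk_reverse (L : List (Bool × Bool)) :
    FreeGroup.mk L.reverse = (invHom (FreeGroup.mk L))⁻¹ := by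
  induction L with
  | nil => simp [← FreeGroup.one_eq_mk]
  | cons p L ih =>
    obtain ⟨x, b⟩ := p
    have h1 : FreeGroup.mk ((x, b) :: L) = FreeGroup.mk [(x, b)] * FreeGroup.mk L := by
      rw [FreeGroup.mul_mk]; rfl
    have h2 : ((x, b) :: L).reverse = L.reverse ++ [(x, b)] := by simp
    rw [h2, ← FreeGroup.mul_mk, ih, h1, map_mul, invHom_mk_single, mul_inv_rev, inv_inv]

lemma wordReverse_eq (w : FreeGroup Bool) : wordReverse w = (invHom w)⁻¹ := by
  rw [wordReverse, mk_reverse, FreeGroup.mk_toWord]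

lemma wordReverse_wordReverse (w : FreeGroup Bool) :
    wordReverse (wordReverse w) = w := by
  rw [wordReverse_eq, wordReverse_eq, map_inv, inv_inv, invHom_invHom]

@[simp] lemma wordReverse_genA : wordReverse genA = genA := by
  rw [wordReverse_eq, genA, invHom_of, inv_inv]

@[simp] lemma wordReverse_genB : wordReverse genB = genB := by
  rw [wordReverse_eq, genB, invHom_of, inv_inv]

/-- Conjugation of a degree-one lift by the orientation-reversing map `x ↦ -x`. -/
def conjE : CircleDeg1Lift →* CircleDeg1Lift where
  toFun f :=
    { toFun := fun x => -(f (-x))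
      monotone' := fun x y h => neg_le_neg (f.monotone (neg_le_neg h))
      map_add_one' := fun x => by
        show -(f (-(x + 1))) = -(f (-x)) + 1
        have : -(x + 1) = -x - (1 : ℤ) := by push_cast; ring
        rw [this, f.map_sub_int]
        push_cast; ring }
  map_one' := by
    apply CircleDeg1Lift.ext
    intro x
    simp [CircleDeg1Lift.coe_one]
  map_mul' f g := by
    apply CircleDeg1Lift.ext
    intro x
    simp [CircleDeg1Lift.mul_apply]
    show -(f (g (-x))) = -(f (-(-(g (-x)))))
    rw [neg_neg]

@[simp] lemma conjE_apply (f : CircleDeg1Lift) (x : ℝ) : conjE f x = -(f (-x)) := rfl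

lemma translationNumber_conjE (f : CircleDeg1Lift) :
    (conjE f).translationNumber = -f.translationNumber := by
  apply CircleDeg1Lift.translationNumber_eq_of_tendsto₀
  have h1 : ∀ n : ℕ, (conjE f)^[n] 0 = -(f^[n] 0) := by
    intro n
    have : (conjE f) ^ n = conjE (f ^ n) := (map_pow conjE f n).symm
    calc (conjE f)^[n] 0 = ((conjE f) ^ n) 0 := by rw [CircleDeg1Lift.coe_pow]
      _ = (conjE (f ^ n)) 0 := by rw [this]
      _ = -((f ^ n) (-0)) := rfl
      _ = -(f^[n] 0) := by rw [neg_zero, CircleDeg1Lift.coe_pow]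
  have h2 : Filter.Tendsto (fun n : ℕ => f^[n] 0 / n) Filter.atTop
      (nhds f.translationNumber) := by
    have := f.tendsto_translation_number₀
    simpa [CircleDeg1Lift.coe_pow] using this
  have := h2.neg
  refine this.congr fun n => ?_
  rw [h1 n, neg_div]

/-- Conjugation by `x ↦ -x` as a homomorphism of units. -/
def conjU : CircleDeg1Liftˣ →* CircleDeg1Liftˣ := Units.map conjE

lemma rotZ_conjU (f : CircleDeg1Liftˣ) : rotZ (conjU f) = -rotZ f := by
  simp [rotZ, conjU, Units.coe_map, translationNumber_conjE]

lemma rotZ_inv (f : CircleDeg1Liftˣ) : rotZ f⁻¹ = -rotZ f :=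
  CircleDeg1Lift.translationNumber_units_inv f

/-- The key construction: from `ρ`, a representation `ρ'` with
`rot(ρ' x) = rot(ρ (wordReverse x))` for every `x`. -/
lemma exists_rev_rep (ρ : FreeGroup Bool →* CircleDeg1Liftˣ) :
    ∃ ρ' : FreeGroup Bool →* CircleDeg1Liftˣ,
      ∀ x, rotZ (ρ' x) = rotZ (ρ (wordReverse x)) := by
  refine ⟨conjU.comp (ρ.comp invHom), fun x => ?_⟩
  have : (conjU.comp (ρ.comp invHom)) x = conjU (ρ (invHom x)) := rfl
  rw [this, rotZ_conjU, wordReverse_eq, map_inv, rotZ_inv]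

lemma RR_subset (w : FreeGroup Bool) (r s : ℝ) :
    { t : ℝ | ∃ ρ : FreeGroup Bool →* CircleDeg1Liftˣ,
      rotZ (ρ genA) = r ∧ rotZ (ρ genB) = s ∧ rotZ (ρ w) = t } ⊆
    { t : ℝ | ∃ ρ : FreeGroup Bool →* CircleDeg1Liftˣ,
      rotZ (ρ genA) = r ∧ rotZ (ρ genB) = s ∧ rotZ (ρ (wordReverse w)) = t } := by
  rintro t ⟨ρ, ha, hb, hw⟩
  obtain ⟨ρ', hρ'⟩ := exists_rev_rep ρ
  refine ⟨ρ', ?_, ?_, ?_⟩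
  · rw [hρ' genA, wordReverse_genA, ha]
  · rw [hρ' genB, wordReverse_genB, hb]
  · rw [hρ' (wordReverse w), wordReverse_wordReverse, hw]

/-- Left-right symmetry: `R(w,r,s) = R(w̄,r,s)` where `w̄` is the reversal of `w`. -/
theorem RR_reverse (w : FreeGroup Bool) (r s : ℝ) :
    RR w r s = RR (wordReverse w) r s := by
  unfold RR
  congr 1
  apply Set.Subset.antisymm
  · exact RR_subset w r s
  · have h := RR_subset (wordReverse w) r s
    rwa [wordReverse_wordReverse] at h
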